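/- If ∫_{[0,1]} p^{−1} Λ(dp) = ∞ (no dust component), then κ(x)/λ(x) → 0 as x → ∞, i.e. κ(x) = o(λ(x)). -/

import Mathlib

open MeasureTheory Real Set Filter Topology

/-- The integrand of `lam`, with its continuous extension `x(x-1)/2` at `p = 0`. -/
noncomputable def lamInt (x p : ℝ) : ℝ :=
  if p = 0 then x * (x - 1) / 2
  else (1 - (1 - p) ^ x - x * p * (1 - p) ^ (x - 1)) / p ^ 2

/-- The total jump rate function `λ(x)` of the `Λ`-coalescent. -/
noncomputable def lam (Λ : Measure ℝ) (x : ℝ) : ℝ :=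
  ∫ p in Set.Icc (0:ℝ) 1, lamInt x p ∂Λ

/-- The integrand of `mu`, with its continuous extension `x(x-1)/2` at `p = 0`. -/
noncomputable def muInt (x p : ℝ) : ℝ :=
  if p = 0 then x * (x - 1) / 2
  else (x * p - 1 + (1 - p) ^ x) / p ^ 2

/-- The rate of decrease `μ(x)` of the `Λ`-coalescent. -/
noncomputable def mu (Λ : Measure ℝ) (x : ℝ) : ℝ :=
  ∫ p in Set.Icc (0:ℝ) 1, muInt x p ∂Λ

/-- The rate of decrease per capita `κ(x) = μ(x)/x`. -/
noncomputable def kappa (Λ : Measure ℝ) (x : ℝ) : ℝ := mu Λ x / x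

/-- Bernoulli lower bound. -/
lemma bern_lower {p x : ℝ} (hp : p ≤ 1) (hx : 1 ≤ x) : 1 - x * p ≤ (1 - p) ^ x := by
  have h := one_add_mul_self_le_rpow_one_add (s := -p) (by linarith) hx
  have h1 : 1 + -p = 1 - p := by ring
  have h2 : 1 + x * -p = 1 - x * p := by ring
  rwa [h1, h2] at h

/-- Key upper bound: `(1-p)^x ≤ (1+x p)⁻¹`. -/
lemma rpow_upper {p x : ℝ} (hp : 0 ≤ p) (hp1 : p ≤ 1) (hx : 1 ≤ x) :
    (1 - p) ^ x ≤ (1 + x * p)⁻¹ := by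
  have h0 : (0:ℝ) < 1 + p := by linarith
  have hxp : (0:ℝ) < 1 + x * p := by nlinarith
  have h1 : (1 - p) ^ x ≤ ((1 + p)⁻¹) ^ x := by
    apply Real.rpow_le_rpow (by linarith)
    · rw [show (1+p)⁻¹ = 1/(1+p) by rw [one_div], le_div_iff₀ h0]; nlinarith
    · linarith
  have h2 : ((1 + p)⁻¹) ^ x = ((1 + p) ^ x)⁻¹ := Real.inv_rpow (by linarith) x
  have h3 : 1 + x * p ≤ (1 + p) ^ x :=
    one_add_mul_self_le_rpow_one_add (by linarith) hx
  calc (1 - p) ^ x ≤ ((1 + p) ^ x)⁻¹ := by rw [← h2]; exact h1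
    _ ≤ (1 + x * p)⁻¹ := by
        apply inv_anti₀ hxp h3

lemma f_form {p x : ℝ} (hp1 : p < 1) :
    1 - (1 - p) ^ x - x * p * (1 - p) ^ (x - 1)
      = 1 - (1 - p) ^ (x - 1) * (1 + (x - 1) * p) := by
  have hne : (1:ℝ) - p ≠ 0 := by linarith
  have h := Real.rpow_add_one hne (x - 1)
  rw [sub_add_cancel] at h
  rw [h]; ring

/-- Core lower bound on the `lamInt` numerator. -/
lemma f_core {p x : ℝ} (hx : 3 ≤ x) (hp : 0 < p) (hp1 : p < 1) :
    ((x-1)/2*p)^2 / (1 + (x-1)/2*p)^2 ≤ 1 - (1 - p) ^ x - x * p * (1 - p) ^ (x - 1) := by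
  set t : ℝ := (x-1)/2 with ht
  have ht1 : 1 ≤ t := by rw [ht]; linarith
  have h1 : (1-p)^t ≤ (1 + t*p)⁻¹ := rpow_upper hp.le hp1.le ht1
  have hs : (0:ℝ) < 1 + t*p := by nlinarith
  have h2 : (1-p)^(x-1) = ((1-p)^t)^2 := by
    rw [← Real.rpow_natCast ((1-p)^t) 2, ← Real.rpow_mul (by linarith)]
    norm_num
    rw [ht]; ring_nf
  have h3 : (1-p)^(x-1) ≤ ((1+t*p)⁻¹)^2 := by
    rw [h2]; exact pow_le_pow_left₀ (Real.rpow_nonneg (by linarith) _) h1 2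
  rw [f_form hp1]
  have h4 : (1-p)^(x-1) * (1 + (x-1)*p) ≤ ((1+t*p)⁻¹)^2 * (1 + (x-1)*p) := by
    apply mul_le_mul_of_nonneg_right h3 (by nlinarith)
  have h5 : ((1+t*p)⁻¹)^2 * (1 + (x-1)*p) = (1 + 2*(t*p))/(1+t*p)^2 := by
    rw [ht]; field_simp
  have h6 : 1 - (1 + 2*(t*p))/(1+t*p)^2 = (t*p)^2/(1+t*p)^2 := by
    field_simp; ring
  calc (t*p)^2 / (1+t*p)^2 = 1 - (1 + 2*(t*p))/(1+t*p)^2 := h6.symm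
    _ ≤ 1 - (1-p)^(x-1) * (1 + (x-1)*p) := by
        rw [h5] at h4; linarith

lemma lamInt_ge_A {x p : ℝ} (hx : 3 ≤ x) (hp : 0 < p) (hpx : p ≤ 1/x) :
    4/81 * x^2 ≤ lamInt x p := by
  have hx0 : (0:ℝ) < x := by linarith
  have hp1 : p < 1 := lt_of_le_of_lt hpx (by rw [div_lt_one hx0]; linarith)
  have hcore := f_core hx hp hp1
  set s : ℝ := (x-1)/2*p with hs
  have hs0 : 0 < 1 + s := by rw [hs]; nlinarith
  have hs2 : s ≤ 1/2 := by
    rw [hs]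
    have : (x-1)/2*p ≤ (x-1)/2*(1/x) := by
      apply mul_le_mul_of_nonneg_left hpx (by linarith)
    calc (x-1)/2*p ≤ (x-1)/2*(1/x) := this
      _ ≤ 1/2 := by rw [div_mul_div_comm, div_le_div_iff₀ (by linarith) (by norm_num)]; nlinarith
  rw [lamInt, if_neg hp.ne']
  rw [le_div_iff₀ (by positivity)]
  have k1 : 4/81 * x^2 * p^2 ≤ s^2/(1+s)^2 := by
    rw [le_div_iff₀ (by positivity)]
    have hsp : s^2 = (x-1)^2*p^2/4 := by rw [hs]; ring
    have hsnn : 0 ≤ s := mul_nonneg (by linarith) hp.le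
    have h9 : (1+s)^2 ≤ 9/4 := by nlinarith
    have h10 : 4/81*x^2*p^2*(1+s)^2 ≤ 4/81*x^2*p^2*(9/4) :=
      mul_le_mul_of_nonneg_left h9 (by positivity)
    have h11 : 4/81*x^2*p^2*(9/4) ≤ s^2 := by
      rw [hsp]
      nlinarith [mul_nonneg (mul_nonneg (by linarith : (0:ℝ) ≤ x-3) (by linarith : (0:ℝ) ≤ 5*x-3)) (sq_nonneg p)]
    linarith
  calc 4/81 * x^2 * p^2 ≤ s^2/(1+s)^2 := k1
    _ ≤ 1 - (1 - p) ^ x - x * p * (1 - p) ^ (x - 1) := hcore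

lemma lamInt_ge_B {x p : ℝ} (hx : 3 ≤ x) (hp : 1/x < p) (hp1 : p ≤ 1) :
    1/16 / p^2 ≤ lamInt x p := by
  have hx0 : (0:ℝ) < x := by linarith
  have hp0 : 0 < p := lt_trans (by positivity) hp
  rcases eq_or_lt_of_le hp1 with rfl | hp1'
  · rw [lamInt, if_neg (by norm_num), show (1:ℝ)-1 = 0 by ring,
      Real.zero_rpow (by linarith), Real.zero_rpow (by linarith)]
    norm_num
  · have hcore := f_core hx hp0 hp1'
    set s : ℝ := (x-1)/2*p with hs
    have hs0 : 0 < 1 + s := by rw [hs]; nlinarith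
    have hs3 : 1/3 ≤ s := by
      rw [hs]
      have h1 : (x-1)/2*(1/x) ≤ (x-1)/2*p := by
        apply mul_le_mul_of_nonneg_left hp.le (by linarith)
      have h2 : (1:ℝ)/3 ≤ (x-1)/2*(1/x) := by
        rw [div_mul_div_comm, le_div_iff₀ (by linarith)]; nlinarith
      linarith
    rw [lamInt, if_neg hp0.ne']
    apply div_le_div_of_nonneg_right ?_ (by positivity)
    calc (1:ℝ)/16 ≤ s^2/(1+s)^2 := by
          rw [le_div_iff₀ (by positivity)]; nlinarith
      _ ≤ _ := hcore

lemma lamInt_nonneg {x p : ℝ} (hx : 3 ≤ x) (hp : 0 ≤ p) (hp1 : p ≤ 1) :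
    0 ≤ lamInt x p := by
  rcases eq_or_lt_of_le hp with rfl | hp0
  · rw [lamInt, if_pos rfl]; nlinarith
  rcases le_or_gt p (1/x) with h | h
  · have := lamInt_ge_A hx hp0 h; nlinarith
  · exact le_trans (by positivity) (lamInt_ge_B hx h hp1)

lemma lamInt_le {x p : ℝ} (hx : 3 ≤ x) (hp : 0 ≤ p) (hp1 : p ≤ 1) :
    lamInt x p ≤ (x-1)^2 := by
  rcases eq_or_lt_of_le hp with rfl | hp0
  · rw [lamInt, if_pos rfl]; nlinarith
  rcases eq_or_lt_of_le hp1 with rfl | hp1'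
  · rw [lamInt, if_neg (by norm_num), show (1:ℝ)-1 = 0 by ring,
      Real.zero_rpow (by linarith), Real.zero_rpow (by linarith)]
    norm_num; rw [le_abs]; left; linarith
  · rw [lamInt, if_neg hp0.ne', div_le_iff₀ (by positivity), f_form hp1']
    have hb : 1 - (x-1)*p ≤ (1-p)^(x-1) := bern_lower hp1 (by linarith)
    have hpos : (0:ℝ) ≤ 1 + (x-1)*p := by nlinarith
    nlinarith [mul_le_mul_of_nonneg_right hb hpos]

lemma muInt_nonneg {x p : ℝ} (hx : 1 ≤ x) (hp : 0 ≤ p) (hp1 : p ≤ 1) :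
    0 ≤ muInt x p := by
  rcases eq_or_lt_of_le hp with rfl | hp0
  · rw [muInt, if_pos rfl]; nlinarith
  · rw [muInt, if_neg hp0.ne']
    have hb : 1 - x*p ≤ (1-p)^x := bern_lower hp1 hx
    apply div_nonneg (by linarith) (by positivity)

lemma muInt_le_sq {x p : ℝ} (hx : 1 ≤ x) (hp : 0 ≤ p) (hp1 : p ≤ 1) :
    muInt x p ≤ x^2 := by
  rcases eq_or_lt_of_le hp with rfl | hp0
  · rw [muInt, if_pos rfl]; nlinarith
  · rw [muInt, if_neg hp0.ne', div_le_iff₀ (by positivity)]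
    have hb : (1-p)^x ≤ (1 + x*p)⁻¹ := rpow_upper hp hp1 hx
    have hxp : (0:ℝ) < 1 + x*p := by nlinarith
    have hinv : (1 + x*p) * (1 + x*p)⁻¹ = 1 := mul_inv_cancel₀ hxp.ne'
    nlinarith [mul_pos (mul_pos hp0 hp0) (mul_pos (mul_pos (by linarith : (0:ℝ) < x) (by linarith : (0:ℝ) < x)) (by linarith : (0:ℝ) < x)),
      mul_le_mul_of_nonneg_left hb hxp.le]

lemma muInt_le_div {x p : ℝ} (hx : 1 ≤ x) (hp : 0 < p) (hp1 : p ≤ 1) :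
    muInt x p ≤ x / p := by
  rw [muInt, if_neg hp.ne', div_le_div_iff₀ (by positivity) hp]
  have hb : (1-p)^x ≤ 1 := Real.rpow_le_one (by linarith) (by linarith) (by linarith)
  nlinarith

section Meas

lemma measurable_aux {x : ℝ} (hx : 3 ≤ x) :
    Measurable fun p : ℝ => (1 - (1 - p) ^ x - x * p * (1 - p) ^ (x - 1)) / p ^ 2 := by
  have m1 : Measurable fun p : ℝ => (1 - p) ^ x :=
    ((Real.continuous_rpow_const (by linarith)).comp
      (continuous_const.sub continuous_id)).measurable
  have m2 : Measurable fun p : ℝ => (1 - p) ^ (x - 1) :=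
    ((Real.continuous_rpow_const (by linarith)).comp
      (continuous_const.sub continuous_id)).measurable
  exact ((measurable_const.sub m1).sub
    ((measurable_id.const_mul x).mul m2)).div (measurable_id.pow_const 2)

lemma measurable_zeroset : MeasurableSet {p : ℝ | p = 0} := by
  simp only [Set.setOf_eq_eq_singleton]; exact measurableSet_singleton 0

lemma measurable_lamInt {x : ℝ} (hx : 3 ≤ x) : Measurable (lamInt x) :=
  Measurable.ite measurable_zeroset measurable_const (measurable_aux hx)

lemma measurable_muInt {x : ℝ} (hx : 3 ≤ x) : Measurable (muInt x) := by
  have m1 : Measurable fun p : ℝ => (1 - p) ^ x :=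
    ((Real.continuous_rpow_const (by linarith)).comp
      (continuous_const.sub continuous_id)).measurable
  exact Measurable.ite measurable_zeroset measurable_const
    ((((measurable_id.const_mul x).sub measurable_const).add m1).div
      (measurable_id.pow_const 2))

variable {Λ : Measure ℝ} [IsFiniteMeasure Λ]

lemma int_lamInt {x : ℝ} (hx : 3 ≤ x) : IntegrableOn (lamInt x) (Icc (0:ℝ) 1) Λ := by
  apply Integrable.mono' (integrable_const ((x-1)^2))
    (measurable_lamInt hx).aestronglyMeasurable
  apply ae_restrict_of_forall_mem measurableSet_Icc
  intro p hp
  rw [Real.norm_eq_abs, abs_of_nonneg (lamInt_nonneg hx hp.1 hp.2)]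
  exact lamInt_le hx hp.1 hp.2

lemma int_muInt {x : ℝ} (hx : 3 ≤ x) : IntegrableOn (muInt x) (Icc (0:ℝ) 1) Λ := by
  apply Integrable.mono' (integrable_const (x^2))
    (measurable_muInt hx).aestronglyMeasurable
  apply ae_restrict_of_forall_mem measurableSet_Icc
  intro p hp
  rw [Real.norm_eq_abs, abs_of_nonneg (muInt_nonneg (by linarith) hp.1 hp.2)]
  exact muInt_le_sq (by linarith) hp.1 hp.2

lemma int_inv_sq {x : ℝ} (hx : 3 ≤ x) :
    IntegrableOn (fun p : ℝ => (p^2)⁻¹) (Ioc (1/x) 1) Λ := by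
  have hx0 : (0:ℝ) < x := by linarith
  apply Integrable.mono' (integrable_const (x^2))
    ((continuous_pow 2).measurable.inv).aestronglyMeasurable
  apply ae_restrict_of_forall_mem measurableSet_Ioc
  intro p hp
  have hp0 : 0 < p := lt_trans (by positivity) hp.1
  have h1 : 1 < x * p := by
    have h := hp.1; rw [div_lt_iff₀ hx0] at h; linarith
  show ‖(p^2)⁻¹‖ ≤ x^2
  rw [Real.norm_eq_abs, abs_of_nonneg (by positivity)]
  have hinv : p^2 * (p^2)⁻¹ = 1 := mul_inv_cancel₀ (by positivity)
  nlinarith [sq_nonneg (x*p - 1), mul_pos hp0 hp0,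
    inv_nonneg.2 (sq_nonneg p)]

lemma int_inv {x : ℝ} (hx : 3 ≤ x) :
    IntegrableOn (fun p : ℝ => p⁻¹) (Ioc (1/x) 1) Λ := by
  have hx0 : (0:ℝ) < x := by linarith
  apply Integrable.mono' (integrable_const x) (measurable_inv).aestronglyMeasurable
  apply ae_restrict_of_forall_mem measurableSet_Ioc
  intro p hp
  have hp0 : 0 < p := lt_trans (by positivity) hp.1
  have h1 : 1 < x * p := by
    have h := hp.1; rw [div_lt_iff₀ hx0] at h; linarith
  rw [Real.norm_eq_abs, abs_of_nonneg (by positivity)]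
  have hinv : p * p⁻¹ = 1 := mul_inv_cancel₀ hp0.ne'
  nlinarith [inv_nonneg.2 hp0.le]

lemma hsplit {x : ℝ} (hx : 3 ≤ x) :
    Icc (0:ℝ) 1 = Icc (0:ℝ) (1/x) ∪ Ioc (1/x) 1 := by
  have hx0 : (0:ℝ) < x := by linarith
  rw [Icc_union_Ioc_eq_Icc (by positivity) (by rw [div_le_one hx0]; linarith)]

lemma hdisj {x : ℝ} : Disjoint (Icc (0:ℝ) (1/x)) (Ioc (1/x) 1) := by
  apply Set.disjoint_left.2
  intro p hp hp'
  exact absurd hp.2 (not_le.2 hp'.1)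

end Meas

section Bounds

variable {Λ : Measure ℝ} [IsFiniteMeasure Λ]

lemma subA {x : ℝ} (hx : 3 ≤ x) : Icc (0:ℝ) (1/x) ⊆ Icc (0:ℝ) 1 := by
  rw [hsplit hx]; exact subset_union_left

lemma subB {x : ℝ} (hx : 3 ≤ x) : Ioc (1/x) (1:ℝ) ⊆ Icc (0:ℝ) 1 := by
  rw [hsplit hx]; exact subset_union_right

lemma mu_le {x : ℝ} (hx : 3 ≤ x) :
    mu Λ x ≤ x^2 * (Λ (Icc (0:ℝ) (1/x))).toReal + x * ∫ p in Ioc (1/x) (1:ℝ), p⁻¹ ∂Λ := by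
  have hx0 : (0:ℝ) < x := by linarith
  have intA := (int_muInt (Λ := Λ) hx).mono_set (subA hx)
  have intB := (int_muInt (Λ := Λ) hx).mono_set (subB hx)
  rw [mu, hsplit hx, setIntegral_union hdisj measurableSet_Ioc intA intB]
  have h1 : ∫ p in Icc (0:ℝ) (1/x), muInt x p ∂Λ
      ≤ ∫ _ in Icc (0:ℝ) (1/x), x^2 ∂Λ := by
    apply setIntegral_mono_on intA (integrableOn_const (measure_ne_top _ _))
      measurableSet_Icc
    intro p hp
    exact muInt_le_sq (by linarith) hp.1
      (le_trans hp.2 (by rw [div_le_one hx0]; linarith))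
  have h2 : ∫ p in Ioc (1/x) (1:ℝ), muInt x p ∂Λ
      ≤ ∫ p in Ioc (1/x) (1:ℝ), x * p⁻¹ ∂Λ := by
    apply setIntegral_mono_on intB ((int_inv hx).const_mul x) measurableSet_Ioc
    intro p hp
    have hp0 : 0 < p := lt_trans (by positivity) hp.1
    have := muInt_le_div (x := x) (by linarith) hp0 hp.2
    rwa [div_eq_mul_inv] at this
  rw [setIntegral_const, measureReal_def, smul_eq_mul, mul_comm] at h1
  rw [integral_const_mul] at h2
  linarith

lemma lam_ge {x : ℝ} (hx : 3 ≤ x) :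
    4/81 * (x^2 * (Λ (Icc (0:ℝ) (1/x))).toReal) + 1/16 * ∫ p in Ioc (1/x) (1:ℝ), (p^2)⁻¹ ∂Λ
      ≤ lam Λ x := by
  have hx0 : (0:ℝ) < x := by linarith
  have intA := (int_lamInt (Λ := Λ) hx).mono_set (subA hx)
  have intB := (int_lamInt (Λ := Λ) hx).mono_set (subB hx)
  rw [lam, hsplit hx, setIntegral_union hdisj measurableSet_Ioc intA intB]
  have h1 : ∫ _ in Icc (0:ℝ) (1/x), (4/81 * x^2) ∂Λ
      ≤ ∫ p in Icc (0:ℝ) (1/x), lamInt x p ∂Λ := by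
    apply setIntegral_mono_on (integrableOn_const (measure_ne_top _ _)) intA
      measurableSet_Icc
    intro p hp
    rcases eq_or_lt_of_le hp.1 with rfl | hp0
    · rw [lamInt, if_pos rfl]; nlinarith
    · exact lamInt_ge_A hx hp0 hp.2
  have h2 : ∫ p in Ioc (1/x) (1:ℝ), (1/16 * (p^2)⁻¹) ∂Λ
      ≤ ∫ p in Ioc (1/x) (1:ℝ), lamInt x p ∂Λ := by
    apply setIntegral_mono_on ((int_inv_sq hx).const_mul (1/16)) intB measurableSet_Ioc
    intro p hp
    have := lamInt_ge_B hx hp.1 hp.2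
    rwa [div_eq_mul_inv] at this
  rw [setIntegral_const, measureReal_def, smul_eq_mul, mul_comm] at h1
  rw [integral_const_mul] at h2
  have e1 : (4:ℝ)/81 * (x^2 * (Λ (Icc (0:ℝ) (1/x))).toReal)
      = (Λ (Icc (0:ℝ) (1/x))).toReal * (4/81 * x^2) := by ring
  rw [e1]
  linarith

lemma J_le {x ε : ℝ} (hx : 3 ≤ x) (hε : 0 < ε) :
    ∫ p in Ioc (1/x) (1:ℝ), p⁻¹ ∂Λ
      ≤ (ε * (Λ (Icc (0:ℝ) 1)).toReal + (∫ p in Ioc (1/x) (1:ℝ), (p^2)⁻¹ ∂Λ) * ε⁻¹) / 2 := by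
  have hx0 : (0:ℝ) < x := by linarith
  have key : ∫ p in Ioc (1/x) (1:ℝ), p⁻¹ ∂Λ
      ≤ ∫ p in Ioc (1/x) (1:ℝ), (ε + (p^2)⁻¹ * ε⁻¹) / 2 ∂Λ := by
    apply setIntegral_mono_on (int_inv hx) ?_ measurableSet_Ioc ?_
    · exact (((integrable_const ε).add ((int_inv_sq hx).mul_const ε⁻¹)).div_const 2)
    intro p hp
    have hp0 : 0 < p := lt_trans (by positivity) hp.1
    rw [le_div_iff₀ (by norm_num : (0:ℝ) < 2)]
    have h1 : p⁻¹ * p = 1 := inv_mul_cancel₀ hp0.ne'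
    have h2 : ε⁻¹ * ε = 1 := inv_mul_cancel₀ hε.ne'
    have h3 : (p^2)⁻¹ = p⁻¹ * p⁻¹ := by rw [sq, mul_inv]
    nlinarith [sq_nonneg (ε - p⁻¹), mul_pos hε (inv_pos.2 hp0), sq_nonneg (ε*p - 1),
      mul_pos hp0 hε, inv_pos.2 hp0, inv_pos.2 hε]
  have expand : ∫ p in Ioc (1/x) (1:ℝ), (ε + (p^2)⁻¹ * ε⁻¹) / 2 ∂Λ
      = ((Λ (Ioc (1/x) (1:ℝ))).toReal * ε + (∫ p in Ioc (1/x) (1:ℝ), (p^2)⁻¹ ∂Λ) * ε⁻¹) / 2 := by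
    rw [integral_div, integral_add (integrable_const ε) ((int_inv_sq hx).mul_const ε⁻¹),
      integral_const, measureReal_def, smul_eq_mul, integral_mul_const, Measure.restrict_apply_univ]
  have hmono : (Λ (Ioc (1/x) (1:ℝ))).toReal ≤ (Λ (Icc (0:ℝ) 1)).toReal :=
    ENNReal.toReal_mono (measure_ne_top _ _) (measure_mono (subB hx))
  calc ∫ p in Ioc (1/x) (1:ℝ), p⁻¹ ∂Λ ≤ _ := key
    _ = _ := expand
    _ ≤ _ := by
        have : (Λ (Ioc (1/x) (1:ℝ))).toReal * ε ≤ (Λ (Icc (0:ℝ) 1)).toReal * ε :=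
          mul_le_mul_of_nonneg_right hmono hε.le
        rw [mul_comm ε]
        linarith

end Bounds

open scoped ENNReal NNReal

section Diverge

variable {Λ : Measure ℝ} [IsFiniteMeasure Λ]

lemma iSup_min_nat (c : ℝ≥0∞) : (⨆ n : ℕ, min (n : ℝ≥0∞) c) = c := by
  apply le_antisymm (iSup_le fun n => min_le_right _ _)
  rcases eq_or_ne c ⊤ with rfl | hc
  · simp only [min_eq_left le_top]
    exact le_of_eq (ENNReal.iSup_natCast).symm
  · obtain ⟨n, hn⟩ := ENNReal.exists_nat_gt hc
    apply le_iSup_of_le n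
    rw [min_eq_right hn.le]

end Diverge

lemma lam_large {Λ : Measure ℝ} [IsFiniteMeasure Λ]
    (hdust : ∫⁻ p in Set.Icc (0:ℝ) 1, (ENNReal.ofReal p)⁻¹ ∂Λ = ⊤) (M : ℝ) :
    ∀ᶠ x in atTop, M ≤ lam Λ x := by
  -- the truncated lintegrals tend to ⊤
  have hmeasc : Measurable fun p : ℝ => (ENNReal.ofReal p)⁻¹ :=
    (ENNReal.measurable_ofReal.comp measurable_id).inv
  have hmeas : ∀ n : ℕ, Measurable fun p : ℝ => min (n : ℝ≥0∞) (ENNReal.ofReal p)⁻¹ :=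
    fun n => measurable_const.min hmeasc
  have hmono : Monotone fun (n : ℕ) (p : ℝ) => min (n : ℝ≥0∞) (ENNReal.ofReal p)⁻¹ :=
    fun m n h p => min_le_min (by exact_mod_cast Nat.cast_le.2 h) le_rfl
  have hsup : (⨆ n : ℕ, ∫⁻ p in Set.Icc (0:ℝ) 1, min (n : ℝ≥0∞) (ENNReal.ofReal p)⁻¹ ∂Λ) = ⊤ := by
    rw [← lintegral_iSup hmeas hmono]
    simp only [iSup_min_nat]
    exact hdust
  have h2 : ENNReal.ofReal (81/4*M+1) < ⊤ := ENNReal.ofReal_lt_top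
  rw [← hsup] at h2
  obtain ⟨N, hN⟩ := lt_iSup_iff.1 h2
  rw [eventually_atTop]
  refine ⟨max (N:ℝ) 3, fun x hx => ?_⟩
  have hx3 : 3 ≤ x := le_trans (le_max_right _ _) hx
  have hxN : (N:ℝ) ≤ x := le_trans (le_max_left _ _) hx
  have hx0 : (0:ℝ) < x := by linarith
  set a : ℝ := (Λ (Icc (0:ℝ) (1/x))).toReal with ha
  set I : ℝ := ∫ p in Ioc (1/x) (1:ℝ), (p^2)⁻¹ ∂Λ with hI
  have ha0 : 0 ≤ a := ENNReal.toReal_nonneg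
  have hI0 : 0 ≤ I := setIntegral_nonneg measurableSet_Ioc (fun p hp => by positivity)
  have key : (∫⁻ p in Set.Icc (0:ℝ) 1, min (N : ℝ≥0∞) (ENNReal.ofReal p)⁻¹ ∂Λ)
      ≤ ENNReal.ofReal (x^2 * a + I) := by
    rw [hsplit hx3, lintegral_union measurableSet_Ioc hdisj]
    have hA : (∫⁻ p in Icc (0:ℝ) (1/x), min (N : ℝ≥0∞) (ENNReal.ofReal p)⁻¹ ∂Λ)
        ≤ ENNReal.ofReal (x^2 * a) := by
      calc (∫⁻ p in Icc (0:ℝ) (1/x), min (N : ℝ≥0∞) (ENNReal.ofReal p)⁻¹ ∂Λ)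
          ≤ ∫⁻ _ in Icc (0:ℝ) (1/x), (N : ℝ≥0∞) ∂Λ :=
            lintegral_mono fun p => min_le_left _ _
        _ = (N : ℝ≥0∞) * Λ (Icc (0:ℝ) (1/x)) := setLIntegral_const _ _
        _ ≤ ENNReal.ofReal (x^2) * Λ (Icc (0:ℝ) (1/x)) := by
            apply mul_le_mul_left
            rw [← ENNReal.ofReal_natCast N]
            exact ENNReal.ofReal_le_ofReal (by nlinarith)
        _ = ENNReal.ofReal (x^2 * a) := by
            rw [ha, ← ENNReal.ofReal_toReal (measure_ne_top Λ (Icc (0:ℝ) (1/x))),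
              ← ENNReal.ofReal_mul (by positivity)]
            rw [ENNReal.toReal_ofReal ENNReal.toReal_nonneg]
    have hB : (∫⁻ p in Ioc (1/x) (1:ℝ), min (N : ℝ≥0∞) (ENNReal.ofReal p)⁻¹ ∂Λ)
        ≤ ENNReal.ofReal I := by
      have step : (∫⁻ p in Ioc (1/x) (1:ℝ), min (N : ℝ≥0∞) (ENNReal.ofReal p)⁻¹ ∂Λ)
          ≤ ∫⁻ p in Ioc (1/x) (1:ℝ), ENNReal.ofReal ((p^2)⁻¹) ∂Λ := by
        apply setLIntegral_mono
          (ENNReal.measurable_ofReal.comp ((continuous_pow 2).measurable.inv))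
        intro p hp
        have hp0 : 0 < p := lt_trans (by positivity) hp.1
        calc min (N : ℝ≥0∞) (ENNReal.ofReal p)⁻¹ ≤ (ENNReal.ofReal p)⁻¹ :=
              min_le_right _ _
          _ = ENNReal.ofReal p⁻¹ := (ENNReal.ofReal_inv_of_pos hp0).symm
          _ ≤ ENNReal.ofReal ((p^2)⁻¹) := by
              apply ENNReal.ofReal_le_ofReal
              apply inv_anti₀ (by positivity)
              nlinarith [hp.2]
      rw [hI]
      rw [ofReal_integral_eq_lintegral_ofReal (int_inv_sq hx3)
        (ae_of_all _ fun p => by positivity)]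
      exact step
    calc _ ≤ ENNReal.ofReal (x^2 * a) + ENNReal.ofReal I := add_le_add hA hB
      _ = ENNReal.ofReal (x^2 * a + I) := (ENNReal.ofReal_add (by positivity) hI0).symm
  have hle : (81:ℝ)/4*M+1 ≤ x^2 * a + I := by
    have := le_trans hN.le key
    exact (ENNReal.ofReal_le_ofReal_iff (by positivity)).1 this
  have hlam := lam_ge (Λ := Λ) hx3
  rw [← ha, ← hI] at hlam
  linarith


/-- If the `Λ`-coalescent has no dust component, then `κ(x) = o(λ(x))` as `x → ∞`. -/
theorem kappa_isLittleO_lam (Λ : Measure ℝ) [IsFiniteMeasure Λ] (hΛ : Λ ≠ 0)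
    (hsupp : Λ (Set.Icc (0:ℝ) 1)ᶜ = 0)
    (hdust : ∫⁻ p in Set.Icc (0:ℝ) 1, (ENNReal.ofReal p)⁻¹ ∂Λ = ⊤) :
    Tendsto (fun x => kappa Λ x / lam Λ x) atTop (𝓝 0) := by
  set C : ℝ := (Λ (Icc (0:ℝ) 1)).toReal with hC
  have hC0 : 0 ≤ C := ENNReal.toReal_nonneg
  have hsqrt : Tendsto (fun x => Real.sqrt (lam Λ x)) atTop atTop := by
    rw [tendsto_atTop]
    intro b
    filter_upwards [lam_large hdust ((max b 0)^2)] with x hx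
    calc b ≤ max b 0 := le_max_left _ _
      _ = Real.sqrt ((max b 0)^2) := (Real.sqrt_sq (le_max_right _ _)).symm
      _ ≤ Real.sqrt (lam Λ x) := Real.sqrt_le_sqrt hx
  have hg : Tendsto (fun x => 81/(4*x) + (C+18)/(2*Real.sqrt (lam Λ x))) atTop (𝓝 0) := by
    have m1 : Tendsto (fun x : ℝ => 4*x) atTop atTop :=
      Tendsto.const_mul_atTop (show (0:ℝ) < 4 by norm_num) tendsto_id
    have m2 : Tendsto (fun x : ℝ => 2*Real.sqrt (lam Λ x)) atTop atTop :=
      Tendsto.const_mul_atTop (show (0:ℝ) < 2 by norm_num) hsqrt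
    have t1 : Tendsto (fun x : ℝ => 81/(4*x)) atTop (𝓝 0) :=
      Tendsto.const_div_atTop m1 81
    have t2 : Tendsto (fun x => (C+18)/(2*Real.sqrt (lam Λ x))) atTop (𝓝 0) :=
      Tendsto.const_div_atTop m2 (C+18)
    simpa using t1.add t2
  apply squeeze_zero' ?_ ?_ hg
  · filter_upwards [eventually_ge_atTop (3:ℝ), lam_large hdust 1] with x hx3 hlam1
    have hmu : 0 ≤ mu Λ x :=
      setIntegral_nonneg measurableSet_Icc fun p hp => muInt_nonneg (by linarith) hp.1 hp.2
    exact div_nonneg (div_nonneg hmu (by linarith)) (by linarith)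
  · filter_upwards [eventually_ge_atTop (3:ℝ), lam_large hdust 1] with x hx3 hlam1
    have hx0 : (0:ℝ) < x := by linarith
    set a : ℝ := (Λ (Icc (0:ℝ) (1/x))).toReal with ha
    set I : ℝ := ∫ p in Ioc (1/x) (1:ℝ), (p^2)⁻¹ ∂Λ with hI
    set J : ℝ := ∫ p in Ioc (1/x) (1:ℝ), p⁻¹ ∂Λ with hJ
    set L : ℝ := lam Λ x with hL
    set s : ℝ := Real.sqrt L with hs
    have ha0 : 0 ≤ a := ENNReal.toReal_nonneg
    have hI0 : 0 ≤ I := setIntegral_nonneg measurableSet_Ioc (fun p hp => by positivity)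
    have hs1 : 1 ≤ s := by
      have := Real.sqrt_le_sqrt hlam1
      rwa [Real.sqrt_one] at this
    have hs2 : s^2 = L := Real.sq_sqrt (by linarith)
    have hlamge := lam_ge (Λ := Λ) hx3
    rw [← ha, ← hI, ← hL] at hlamge
    have hxa2 : 0 ≤ x^2*a := by positivity
    -- kappa ≤ x*a + J
    have hkap : kappa Λ x ≤ x*a + J := by
      have h1 := mu_le (Λ := Λ) hx3
      rw [← ha, ← hJ] at h1
      have h2 : kappa Λ x ≤ (x^2*a + x*J)/x := by
        rw [kappa]
        exact div_le_div_of_nonneg_right h1 hx0.le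
      calc kappa Λ x ≤ (x^2*a + x*J)/x := h2
        _ = x*a + J := by field_simp
    -- J ≤ (s*C + 16*s)/2
    have hJle : J ≤ (s*C + 16*s)/2 := by
      have h1 := J_le (Λ := Λ) hx3 (show (0:ℝ) < s by linarith)
      rw [← hJ, ← hI, ← hC] at h1
      have hI16 : I ≤ 16*L := by linarith
      have hsinv : s * s⁻¹ = 1 := mul_inv_cancel₀ (by linarith)
      have h2 : I * s⁻¹ ≤ 16*s := by
        have h3 : I * s⁻¹ ≤ 16*L*s⁻¹ :=
          mul_le_mul_of_nonneg_right hI16 (inv_nonneg.2 (by linarith))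
        have h4 : 16*L*s⁻¹ = 16*s := by
          rw [← hs2]; field_simp
        linarith
      linarith
    -- x*a ≤ 81/(4*x)*L
    have hxa : x*a ≤ 81/(4*x)*L := by
      rw [show 81/(4*x)*L = (81*L)/(4*x) by ring, le_div_iff₀ (by linarith)]
      nlinarith
    have hfin : kappa Λ x ≤ 81/(4*x)*L + (s*C+16*s)/2 := by linarith
    have hL0 : 0 < L := by linarith
    calc kappa Λ x / lam Λ x ≤ (81/(4*x)*L + (s*C+16*s)/2) / L := by
          rw [← hL]
          exact div_le_div_of_nonneg_right hfin hL0.le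
      _ ≤ 81/(4*x) + (C+18)/(2*s) := by
          rw [← hs2, div_le_iff₀ (by positivity : (0:ℝ) < s^2)]
          have e : (81/(4*x) + (C+18)/(2*s)) * s^2 = 81/(4*x)*s^2 + (C+18)*s/2 := by
            field_simp
          rw [e]
          nlinarith
      _ = 81/(4*x) + (C+18)/(2*Real.sqrt (lam Λ x)) := by rw [← hL, ← hs]
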